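/- Compression penalty under mismatched forward link: if X^n and Y^n are independent with pmfs p(x^n), p(y^n), but a lossless code is designed for the distribution q(x^n,y^n) = p(x^n)·p̃(y^n||x^n) (where p̃(y^n||x^n) comes from some joint p̃ with the correct marginals), then the ideal expected codelength E[−log q(X^n,Y^n)] = L₁(X^n → Y^n) + H(X^n) + H(Y^n); i.e., the redundancy is the first-type directed lautum information. -/
import Mathlib


open scoped Classical
open Real

noncomputable section

variable {α β : Type} [Fintype α] [DecidableEq α] [Fintype β] [DecidableEq β]

/-- Probability of the event `E` under the joint pmf `p` of `(X^n, Y^n)`. -/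
def pr {n : ℕ} (p : (Fin n → α) → (Fin n → β) → ℝ)
    (E : (Fin n → α) → (Fin n → β) → Prop) : ℝ :=
  ∑ x, ∑ y, if E x y then p x y else 0

/-- `p` is a probability mass function on pairs of sequences. -/
def IsPmf {n : ℕ} (p : (Fin n → α) → (Fin n → β) → ℝ) : Prop :=
  (∀ x y, 0 ≤ p x y) ∧ ∑ x, ∑ y, p x y = 1

/-- The conditional pmf `p(x_i | x^{i-1}, y^{i-d})` evaluated along `(x, y)`. -/
def condX {n : ℕ} (p : (Fin n → α) → (Fin n → β) → ℝ) (d : ℕ) (i : Fin n)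
    (x : Fin n → α) (y : Fin n → β) : ℝ :=
  pr p (fun x' y' => (∀ j, j < i → x' j = x j) ∧ x' i = x i ∧
      ∀ j : Fin n, (j : ℕ) + d ≤ (i : ℕ) → y' j = y j) /
  pr p (fun x' y' => (∀ j, j < i → x' j = x j) ∧
      ∀ j : Fin n, (j : ℕ) + d ≤ (i : ℕ) → y' j = y j)

/-- The conditional pmf `p(y_i | y^{i-1}, x^{i-d})` evaluated along `(x, y)`. -/
def condY {n : ℕ} (p : (Fin n → α) → (Fin n → β) → ℝ) (d : ℕ) (i : Fin n)
    (x : Fin n → α) (y : Fin n → β) : ℝ :=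
  pr p (fun x' y' => (∀ j, j < i → y' j = y j) ∧ y' i = y i ∧
      ∀ j : Fin n, (j : ℕ) + d ≤ (i : ℕ) → x' j = x j) /
  pr p (fun x' y' => (∀ j, j < i → y' j = y j) ∧
      ∀ j : Fin n, (j : ℕ) + d ≤ (i : ℕ) → x' j = x j)

/-- Causally conditioned pmf `p(x^n || y^{n-d}) = ∏ᵢ p(xᵢ | x^{i-1}, y^{i-d})`. -/
def ccX {n : ℕ} (p : (Fin n → α) → (Fin n → β) → ℝ) (d : ℕ)
    (x : Fin n → α) (y : Fin n → β) : ℝ :=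
  ∏ i, condX p d i x y

/-- Causally conditioned pmf `p(y^n || x^{n-d}) = ∏ᵢ p(yᵢ | y^{i-1}, x^{i-d})`. -/
def ccY {n : ℕ} (p : (Fin n → α) → (Fin n → β) → ℝ) (d : ℕ)
    (x : Fin n → α) (y : Fin n → β) : ℝ :=
  ∏ i, condY p d i x y

/-- Marginal pmf of `X^n`. -/
def pX {n : ℕ} (p : (Fin n → α) → (Fin n → β) → ℝ) (x : Fin n → α) : ℝ := ∑ y, p x y

/-- Marginal pmf of `Y^n`. -/
def pY {n : ℕ} (p : (Fin n → α) → (Fin n → β) → ℝ) (y : Fin n → β) : ℝ := ∑ x, p x y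

/-- `H(X^n)` in bits. -/
def HX {n : ℕ} (p : (Fin n → α) → (Fin n → β) → ℝ) : ℝ :=
  -(∑ x, ∑ y, p x y * Real.logb 2 (pX p x))

/-- `H(Y^n)` in bits. -/
def HY {n : ℕ} (p : (Fin n → α) → (Fin n → β) → ℝ) : ℝ :=
  -(∑ x, ∑ y, p x y * Real.logb 2 (pY p y))

/-- Joint entropy `H(X^n, Y^n)` in bits. -/
def Hjoint {n : ℕ} (p : (Fin n → α) → (Fin n → β) → ℝ) : ℝ :=
  -(∑ x, ∑ y, p x y * Real.logb 2 (p x y))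

/-- Conditional entropy `H(X_i | X^{i-1}, Y^{i-d})` in bits. -/
def HcondX {n : ℕ} (p : (Fin n → α) → (Fin n → β) → ℝ) (d : ℕ) (i : Fin n) : ℝ :=
  -(∑ x, ∑ y, p x y * Real.logb 2 (condX p d i x y))

/-- Conditional entropy `H(Y_i | Y^{i-1}, X^{i-d})` in bits. -/
def HcondY {n : ℕ} (p : (Fin n → α) → (Fin n → β) → ℝ) (d : ℕ) (i : Fin n) : ℝ :=
  -(∑ x, ∑ y, p x y * Real.logb 2 (condY p d i x y))

/-- Causally conditional entropy `H(X^n || Y^{n-d}) = Σᵢ H(Xᵢ | X^{i-1}, Y^{i-d})`. -/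
def HccX {n : ℕ} (p : (Fin n → α) → (Fin n → β) → ℝ) (d : ℕ) : ℝ := ∑ i, HcondX p d i

/-- Causally conditional entropy `H(Y^n || X^{n-d})`. -/
def HccY {n : ℕ} (p : (Fin n → α) → (Fin n → β) → ℝ) (d : ℕ) : ℝ := ∑ i, HcondY p d i

/-- Conditional mutual information `I(Y^i; X_i | X^{i-1})`
(as the expectation of `log (p(xᵢ|x^{i-1},y^i) / p(xᵢ|x^{i-1}))`;
note `condX p n` is `p(xᵢ|x^{i-1})`, conditioning on no `y`'s at all). -/
def cmiYX {n : ℕ} (p : (Fin n → α) → (Fin n → β) → ℝ) (i : Fin n) : ℝ :=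
  ∑ x, ∑ y, p x y * Real.logb 2 (condX p 0 i x y / condX p n i x y)

/-- Conditional mutual information `I(X^i; Y_i | Y^{i-1})`. -/
def cmiXY {n : ℕ} (p : (Fin n → α) → (Fin n → β) → ℝ) (i : Fin n) : ℝ :=
  ∑ x, ∑ y, p x y * Real.logb 2 (condY p 0 i x y / condY p n i x y)

/-- Directed information `I(Y^n → X^n) = Σᵢ I(Y^i; X_i | X^{i-1})`. -/
def dirYX {n : ℕ} (p : (Fin n → α) → (Fin n → β) → ℝ) : ℝ := ∑ i, cmiYX p i

/-- Directed information `I(X^n → Y^n) = Σᵢ I(X^i; Y_i | Y^{i-1})`. -/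
def dirXY {n : ℕ} (p : (Fin n → α) → (Fin n → β) → ℝ) : ℝ := ∑ i, cmiXY p i

/-- Directed information `I(Y^{n-1} → X^n) = Σᵢ I(Y^{i-1}; X_i | X^{i-1})`
(the term for `i = 1` vanishes, so we may sum over all `i`). -/
def dirY1X {n : ℕ} (p : (Fin n → α) → (Fin n → β) → ℝ) : ℝ :=
  ∑ i, ∑ x, ∑ y, p x y * Real.logb 2 (condX p 1 i x y / condX p n i x y)

/-- Mutual information `I(X^n; Y^n)` in bits. -/
def miXY {n : ℕ} (p : (Fin n → α) → (Fin n → β) → ℝ) : ℝ :=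
  ∑ x, ∑ y, p x y * Real.logb 2 (p x y / (pX p x * pY p y))

/-- compression penalty under a mismatched forward link. `X^n ⟂ Y^n`
with pmfs `f`, `g`, but the code is designed for
`q(x^n,y^n) = f(x^n) p̃(y^n||x^n)`, where `p̃` is a joint pmf with the correct
marginals. Then the ideal expected codelength satisfies
`E[−log q(X^n,Y^n)] = L₁(X^n → Y^n) + H(X^n) + H(Y^n)`; i.e. the redundancy is the
first-type directed lautum information. -/
theorem compression_penalty_mismatched_forward_link {n : ℕ}
    (f : (Fin n → α) → ℝ) (g : (Fin n → β) → ℝ)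
    (hf : (∀ x, 0 ≤ f x) ∧ ∑ x, f x = 1)
    (hg : (∀ y, 0 ≤ g y) ∧ ∑ y, g y = 1)
    (pt : (Fin n → α) → (Fin n → β) → ℝ) (hpt : IsPmf pt)
    (hmargX : ∀ x, pX pt x = f x) (hmargY : ∀ y, pY pt y = g y)
    (hpos : ∀ x y, 0 < f x * g y → 0 < ccY pt 0 x y) :
    -(∑ x, ∑ y, f x * g y * Real.logb 2 (f x * ccY pt 0 x y)) =
      (∑ x, ∑ y, f x * g y * Real.logb 2 (g y / ccY pt 0 x y)) +
        (-(∑ x, f x * Real.logb 2 (f x))) +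
        (-(∑ y, g y * Real.logb 2 (g y))) := by
  obtain ⟨hf0, hf1⟩ := hf
  obtain ⟨hg0, hg1⟩ := hg
  have key : ∀ x y, f x * g y * Real.logb 2 (g y / ccY pt 0 x y)
      - f x * g y * Real.logb 2 (f x) - f x * g y * Real.logb 2 (g y)
      = -(f x * g y * Real.logb 2 (f x * ccY pt 0 x y)) := by
    intro x y
    rcases eq_or_lt_of_le (mul_nonneg (hf0 x) (hg0 y)) with h | h
    · rw [← h]; ring
    · have hcc := hpos x y h
      have hfx : 0 < f x := by
        rcases (hf0 x).lt_or_eq with h' | h'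
        · exact h'
        · rw [← h', zero_mul] at h; exact absurd h (lt_irrefl 0)
      have hgy : 0 < g y := by
        rcases (hg0 y).lt_or_eq with h' | h'
        · exact h'
        · rw [← h', mul_zero] at h; exact absurd h (lt_irrefl 0)
      rw [Real.logb_mul (ne_of_gt hfx) (ne_of_gt hcc),
        Real.logb_div (ne_of_gt hgy) (ne_of_gt hcc)]
      ring
  have e1 : ∑ x, f x * Real.logb 2 (f x)
      = ∑ x, ∑ y, f x * g y * Real.logb 2 (f x) := by
    refine Finset.sum_congr rfl fun x _ => ?_
    calc f x * Real.logb 2 (f x)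
        = (∑ y, g y) * (f x * Real.logb 2 (f x)) := by rw [hg1, one_mul]
      _ = ∑ y, f x * g y * Real.logb 2 (f x) := by
          rw [Finset.sum_mul]; exact Finset.sum_congr rfl fun y _ => by ring
  have e2 : ∑ y, g y * Real.logb 2 (g y)
      = ∑ x, ∑ y, f x * g y * Real.logb 2 (g y) := by
    calc ∑ y, g y * Real.logb 2 (g y)
        = (∑ x, f x) * ∑ y, g y * Real.logb 2 (g y) := by rw [hf1, one_mul]
      _ = ∑ x, f x * ∑ y, g y * Real.logb 2 (g y) := by rw [Finset.sum_mul]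
      _ = ∑ x, ∑ y, f x * g y * Real.logb 2 (g y) := by
          refine Finset.sum_congr rfl fun x _ => ?_
          rw [Finset.mul_sum]; exact Finset.sum_congr rfl fun y _ => by ring
  have main : (∑ x, ∑ y, f x * g y * Real.logb 2 (g y / ccY pt 0 x y))
      - (∑ x, ∑ y, f x * g y * Real.logb 2 (f x))
      - (∑ x, ∑ y, f x * g y * Real.logb 2 (g y))
      = -(∑ x, ∑ y, f x * g y * Real.logb 2 (f x * ccY pt 0 x y)) := by
    simp only [← Finset.sum_sub_distrib, ← Finset.sum_neg_distrib]
    exact Finset.sum_congr rfl fun x _ => Finset.sum_congr rfl fun y _ => key x y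
  linarith [main, e1, e2]
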